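/- arXiv:1803.01590 — 2 statements merged into one kernel-verified Lean document; each statement's English description precedes it below -/
import Mathlib

section
/- For all nonnegative integers n ≥ 1, k ≤ n and m, there exists an injection g from pRInc^m_k(2×n) into RInc^m_k(2×n) such that for every prime row-increasing tableau T ∈ pRInc^m_k(2×n): (1) the second row of g(T) equals the second row of T; (2) if T_{2,1} appears only once in T, then g(T)_{1,i+1} ≤ g(T)_{2,i} for every i with 1 ≤ i ≤ n−1; (3) T_{2,1} appears twice in T if and only if g(T)_{1,n} = g(T)_{2,n}; and (4) maj(g(T)) = amaj(T) + n − k if T_{1,1} = T_{2,1}, while maj(g(T)) = amaj(T) + m + n − k if T_{1,1} ≠ T_{2,1}. -/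
/-- Major index: sum of all `i` such that `i` appears in row 1 and `i+1` appears in row 2. -/
def maj {n : ℕ} (T : (Fin n → ℕ) × (Fin n → ℕ)) : ℕ :=
  ∑ i ∈ (Finset.image T.1 Finset.univ).filter (fun i => ∃ j, T.2 j = i + 1), i

/-- Amajor index: sum of all `i` such that `i` appears in row 2 and `i+1` appears in row 1. -/
def amaj {n : ℕ} (T : (Fin n → ℕ) × (Fin n → ℕ)) : ℕ :=
  ∑ i ∈ (Finset.image T.2 Finset.univ).filter (fun i => ∃ j, T.1 j = i + 1), i

/-- Row-increasing tableaux of shape 2×n with entry set `{m+1, …, m+2n−k}`. -/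
def RIncM (n k m : ℕ) : Set ((Fin n → ℕ) × (Fin n → ℕ)) :=
  {T | StrictMono T.1 ∧ StrictMono T.2 ∧ (∀ i, T.1 i ≤ T.2 i) ∧
    Set.range T.1 ∪ Set.range T.2 = Set.Icc (m + 1) (m + 2 * n - k)}

/-- Prime row-increasing tableaux: whenever `T_{1,j+1} = T_{2,j} + 1` (adjacent columns),
the value `T_{2,j+1}` also appears in row 1. -/
def pRIncM (n k m : ℕ) : Set ((Fin n → ℕ) × (Fin n → ℕ)) :=
  {T | T ∈ RIncM n k m ∧
    ∀ i j : Fin n, (j : ℕ) = (i : ℕ) + 1 → T.1 j = T.2 i + 1 → ∃ l, T.1 l = T.2 j}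

namespace GInj

/-- Cyclic shift down by one on `Fin n`. -/
def rot {n : ℕ} (l : Fin n) : Fin n :=
  if (l : ℕ) = 0 then ⟨n - 1, Nat.sub_lt l.pos Nat.one_pos⟩
  else ⟨(l : ℕ) - 1, by have := l.isLt; omega⟩

lemma rot_val_zero {n : ℕ} (l : Fin n) (h : (l : ℕ) = 0) : (rot l : ℕ) = n - 1 := by
  simp [rot, h]

lemma rot_val_pos {n : ℕ} (l : Fin n) (h : (l : ℕ) ≠ 0) : (rot l : ℕ) = (l : ℕ) - 1 := by
  simp [rot, h]

lemma rot_inj {n : ℕ} : Function.Injective (rot (n := n)) := by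
  intro l l' h
  have hl := l.isLt; have hl' := l'.isLt
  have h' : (rot l : ℕ) = (rot l' : ℕ) := by rw [h]
  apply Fin.ext
  by_cases h1 : (l : ℕ) = 0 <;> by_cases h2 : (l' : ℕ) = 0
  · omega
  · rw [rot_val_zero l h1, rot_val_pos l' h2] at h'; omega
  · rw [rot_val_pos l h1, rot_val_zero l' h2] at h'; omega
  · rw [rot_val_pos l h1, rot_val_pos l' h2] at h'; omega

/-- The new first-row entry set. -/
def gset (n k m : ℕ) (T : (Fin n → ℕ) × (Fin n → ℕ)) : Finset ℕ :=
  (Finset.Icc (m + 1) (m + 2 * n - k) \ Finset.image T.2 Finset.univ) ∪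
    Finset.image (fun l => T.2 (rot l))
      (Finset.univ.filter (fun j => T.2 j ∈ Finset.image T.1 Finset.univ))

/-- The injection. -/
noncomputable def gmap (n k m : ℕ) (T : (Fin n → ℕ) × (Fin n → ℕ)) :
    (Fin n → ℕ) × (Fin n → ℕ) :=
  if h : (gset n k m T).card = n then
    ((fun i => (gset n k m T).orderEmbOfFin h i), T.2)
  else T

/-- Counting characterization of the sorted enumeration. -/
lemma orderEmb_le_iff {s : Finset ℕ} {n : ℕ} (h : s.card = n) (i : Fin n) (v : ℕ) :
    (s.orderEmbOfFin h i : ℕ) ≤ v ↔ (i : ℕ) + 1 ≤ (s.filter (fun x => x ≤ v)).card := by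
  constructor
  · intro hle
    have hsub : (Finset.Iic i).image (s.orderEmbOfFin h) ⊆ s.filter (fun x => x ≤ v) := by
      intro x hx
      simp only [Finset.mem_image, Finset.mem_Iic] at hx
      obtain ⟨j, hj, rfl⟩ := hx
      exact Finset.mem_filter.2 ⟨Finset.orderEmbOfFin_mem s h j,
        le_trans ((s.orderEmbOfFin h).monotone hj) hle⟩
    calc (i : ℕ) + 1 = (Finset.Iic i).card := (Fin.card_Iic i).symm
      _ = ((Finset.Iic i).image (s.orderEmbOfFin h)).card :=
          (Finset.card_image_of_injective _ (s.orderEmbOfFin h).injective).symm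
      _ ≤ _ := Finset.card_le_card hsub
  · intro hcard
    by_contra hlt
    push_neg at hlt
    have hsub : s.filter (fun x => x ≤ v) ⊆ (Finset.Iio i).image (s.orderEmbOfFin h) := by
      intro x hx
      obtain ⟨hxs, hxv⟩ := Finset.mem_filter.1 hx
      have : x ∈ Set.range (s.orderEmbOfFin h) := by
        rw [Finset.range_orderEmbOfFin]; exact hxs
      obtain ⟨j, rfl⟩ := this
      have : j < i := by
        by_contra hji
        push_neg at hji
        exact absurd (le_trans ((s.orderEmbOfFin h).monotone hji) hxv) (not_le.2 hlt)
      exact Finset.mem_image.2 ⟨j, Finset.mem_Iio.2 this, rfl⟩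
    have := Finset.card_le_card hsub
    rw [Finset.card_image_of_injective _ (s.orderEmbOfFin h).injective, Fin.card_Iio] at this
    omega

/-- Telescoping identity. -/
lemma telescope (A : Finset ℕ) (h1 : ∀ w ∈ A, 1 ≤ w) :
    ∑ v ∈ A.filter (fun v => v + 1 ∉ A), v
      = ∑ w ∈ A.filter (fun w => w - 1 ∉ A), (w - 1) + A.card := by
  have s3 : ∑ v ∈ A.filter (fun v => v + 1 ∈ A), v
      = ∑ w ∈ A.filter (fun w => w - 1 ∈ A), (w - 1) := by
    refine Finset.sum_nbij' (fun v => v + 1) (fun w => w - 1) ?_ ?_ ?_ ?_ ?_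
    · intro v hv
      obtain ⟨hvA, hv1⟩ := Finset.mem_filter.1 hv
      exact Finset.mem_filter.2 ⟨hv1, by simpa using hvA⟩
    · intro w hw
      obtain ⟨hwA, hw1⟩ := Finset.mem_filter.1 hw
      refine Finset.mem_filter.2 ⟨hw1, ?_⟩
      have := h1 w hwA
      have : w - 1 + 1 = w := by omega
      rw [this]; exact hwA
    · intro v _; show v + 1 - 1 = v; omega
    · intro w hw
      have := h1 w (Finset.mem_filter.1 hw).1
      show w - 1 + 1 = w; omega
    · intro v _; show v = v + 1 - 1; omega
  have s1 := Finset.sum_filter_add_sum_filter_not A (fun v => v + 1 ∈ A) (fun v => v)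
  have s2 := Finset.sum_filter_add_sum_filter_not A (fun w => w - 1 ∈ A) (fun w => w - 1)
  have s4 : ∑ v ∈ A, v = (∑ w ∈ A, (w - 1)) + A.card := by
    rw [Finset.card_eq_sum_ones A, ← Finset.sum_add_distrib]
    exact Finset.sum_congr rfl (fun w hw => by have := h1 w hw; omega)
  omega


/-- The set of "doubled" column indices. -/
def Dset (n : ℕ) (T : (Fin n → ℕ) × (Fin n → ℕ)) : Finset (Fin n) :=
  Finset.univ.filter (fun j => T.2 j ∈ Finset.image T.1 Finset.univ)

set_option maxHeartbeats 2000000 in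
lemma master {n k m : ℕ} (hn : 1 ≤ n) (hk : k ≤ n) (T : (Fin n → ℕ) × (Fin n → ℕ))
    (hT : T ∈ pRIncM n k m) :
    (gmap n k m T).2 = T.2 ∧
    Finset.image (gmap n k m T).1 Finset.univ = gset n k m T ∧
    gset n k m T ∩ Finset.image T.2 Finset.univ
      = Finset.image (fun l => T.2 (rot l)) (Dset n T) ∧
    Finset.image T.1 Finset.univ
      = (Finset.Icc (m + 1) (m + 2 * n - k) \ Finset.image T.2 Finset.univ)
          ∪ Finset.image T.2 (Dset n T) ∧
    gmap n k m T ∈ RIncM n k m ∧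
    ((¬ ∃ j, T.1 j = T.2 ⟨0, hn⟩) →
      ∀ i j : Fin n, (j : ℕ) = (i : ℕ) + 1 → (gmap n k m T).1 j ≤ (gmap n k m T).2 i) ∧
    ((∃ j, T.1 j = T.2 ⟨0, hn⟩) ↔
      (gmap n k m T).1 ⟨n - 1, Nat.sub_lt hn Nat.one_pos⟩ = (gmap n k m T).2 ⟨n - 1, Nat.sub_lt hn Nat.one_pos⟩) ∧
    (T.1 ⟨0, hn⟩ = T.2 ⟨0, hn⟩ → maj (gmap n k m T) = amaj T + (n - k)) ∧
    (T.1 ⟨0, hn⟩ ≠ T.2 ⟨0, hn⟩ → maj (gmap n k m T) = amaj T + m + (n - k)) := by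
  obtain ⟨a, b⟩ := T
  obtain ⟨⟨ha, hb, hcol, hU⟩, hprime⟩ := hT
  simp only at ha hb hcol hU hprime
  have hm1M : m + 1 ≤ m + 2 * n - k := by omega
  set S := Finset.Icc (m + 1) (m + 2 * n - k) with hS_def
  set B := Finset.image b Finset.univ with hB_def
  set R1 := Finset.image a Finset.univ with hR1_def
  have hUf : R1 ∪ B = S := by
    apply Finset.coe_injective
    simp only [Finset.coe_union, hR1_def, hB_def, hS_def, Finset.coe_image,
      Finset.coe_univ, Set.image_univ, Finset.coe_Icc]
    exact hU
  have haS : ∀ i, a i ∈ S := by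
    intro i; rw [← hUf]
    exact Finset.mem_union_left _ (Finset.mem_image_of_mem a (Finset.mem_univ i))
  have hbS : ∀ i, b i ∈ S := by
    intro i; rw [← hUf]
    exact Finset.mem_union_right _ (Finset.mem_image_of_mem b (Finset.mem_univ i))
  have haIcc : ∀ i, m + 1 ≤ a i ∧ a i ≤ m + 2 * n - k := fun i => Finset.mem_Icc.1 (haS i)
  have hbIcc : ∀ i, m + 1 ≤ b i ∧ b i ≤ m + 2 * n - k := fun i => Finset.mem_Icc.1 (hbS i)
  have hzle : ∀ j : Fin n, (⟨0, hn⟩ : Fin n) ≤ j := by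
    intro j; rw [Fin.le_def]; simp
  have hlast : ∀ j : Fin n, j ≤ (⟨n - 1, by omega⟩ : Fin n) := by
    intro j; rw [Fin.le_def]; have := j.isLt; simp; omega
  have ha0 : a ⟨0, hn⟩ = m + 1 := by
    have hmem : m + 1 ∈ S := Finset.mem_Icc.2 ⟨le_refl _, by omega⟩
    rw [← hUf] at hmem
    have h0 := (haIcc ⟨0, hn⟩).1
    rcases Finset.mem_union.1 hmem with h | h
    · obtain ⟨j, _, hj⟩ := Finset.mem_image.1 h
      have := ha.monotone (hzle j)
      omega
    · obtain ⟨j, _, hj⟩ := Finset.mem_image.1 h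
      have h1 := hcol ⟨0, hn⟩
      have h2 := hb.monotone (hzle j)
      omega
  have hblast : b ⟨n - 1, by omega⟩ = m + 2 * n - k := by
    have hmem : m + 2 * n - k ∈ S := Finset.mem_Icc.2 ⟨by omega, le_refl _⟩
    rw [← hUf] at hmem
    have h0 := (hbIcc ⟨n - 1, by omega⟩).2
    rcases Finset.mem_union.1 hmem with h | h
    · obtain ⟨j, _, hj⟩ := Finset.mem_image.1 h
      have h1 := hcol j
      have h2 := hb.monotone (hlast j)
      omega
    · obtain ⟨j, _, hj⟩ := Finset.mem_image.1 h
      have h2 := hb.monotone (hlast j)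
      omega
  set A := S \ B with hA_def
  set D := Finset.univ.filter (fun j : Fin n => b j ∈ R1) with hD_def
  have hDset : Dset n (a, b) = D := rfl
  set bD' := Finset.image (fun l => b (rot l)) D with hbD'_def
  have hgset : gset n k m (a, b) = A ∪ bD' := rfl
  have hAS : A ⊆ S := Finset.sdiff_subset
  have hAB : Disjoint A B := Finset.sdiff_disjoint
  have hbD'B : bD' ⊆ B := by
    intro v hv
    obtain ⟨l, _, rfl⟩ := Finset.mem_image.1 hv
    exact Finset.mem_image_of_mem b (Finset.mem_univ _)
  have hdisj : Disjoint A bD' := hAB.mono_right hbD'B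
  have hBS : B ⊆ S := by rw [← hUf]; exact Finset.subset_union_right
  have hGS : gset n k m (a, b) ⊆ S := by
    rw [hgset]; exact Finset.union_subset hAS (hbD'B.trans hBS)
  have hcardB : B.card = n := by
    rw [hB_def, Finset.card_image_of_injective _ hb.injective]; simp
  have hcardR1 : R1.card = n := by
    rw [hR1_def, Finset.card_image_of_injective _ ha.injective]; simp
  have hcardS : S.card = 2 * n - k := by
    rw [hS_def, Nat.card_Icc]; omega
  have hR1eq : R1 = A ∪ Finset.image b D := by
    ext v
    constructor
    · intro hv
      by_cases hvB : v ∈ B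
      · apply Finset.mem_union_right
        obtain ⟨j, _, rfl⟩ := Finset.mem_image.1 hvB
        exact Finset.mem_image.2 ⟨j, Finset.mem_filter.2 ⟨Finset.mem_univ j, hv⟩, rfl⟩
      · apply Finset.mem_union_left
        refine Finset.mem_sdiff.2 ⟨?_, hvB⟩
        rw [← hUf]; exact Finset.mem_union_left _ hv
    · intro hv
      rcases Finset.mem_union.1 hv with h | h
      · obtain ⟨hvS, hvB⟩ := Finset.mem_sdiff.1 h
        rw [← hUf] at hvS
        rcases Finset.mem_union.1 hvS with h' | h'
        · exact h'
        · exact absurd h' hvB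
      · obtain ⟨j, hj, rfl⟩ := Finset.mem_image.1 h
        exact (Finset.mem_filter.1 hj).2
  have hDcard : D.card = k := by
    have him : Finset.image b D = R1 ∩ B := by
      ext v
      constructor
      · intro hv
        obtain ⟨j, hj, rfl⟩ := Finset.mem_image.1 hv
        exact Finset.mem_inter.2 ⟨(Finset.mem_filter.1 hj).2,
          Finset.mem_image_of_mem b (Finset.mem_univ j)⟩
      · intro hv
        obtain ⟨hvR, hvB⟩ := Finset.mem_inter.1 hv
        obtain ⟨j, _, rfl⟩ := Finset.mem_image.1 hvB
        exact Finset.mem_image.2 ⟨j, Finset.mem_filter.2 ⟨Finset.mem_univ j, hvR⟩, rfl⟩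
    have h1 : (Finset.image b D).card = D.card :=
      Finset.card_image_of_injective _ hb.injective
    have h2 := Finset.card_inter_add_card_union R1 B
    rw [hUf, hcardS, hcardR1, hcardB, ← him, h1] at h2
    omega
  have hcardA : A.card = n - k := by
    have : A.card = S.card - B.card := Finset.card_sdiff_of_subset hBS
    omega
  have hbrot_inj : Function.Injective (fun l : Fin n => b (rot l)) :=
    fun x y h => rot_inj (hb.injective h)
  have hcardbD' : bD'.card = k := by
    rw [hbD'_def, Finset.card_image_of_injective _ hbrot_inj, hDcard]
  have hcardG : (gset n k m (a, b)).card = n := by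
    rw [hgset, Finset.card_union_of_disjoint hdisj]
    omega
  have hgmap : gmap n k m (a, b)
      = ((fun i => ((gset n k m (a, b)).orderEmbOfFin hcardG i : ℕ)), b) := by
    rw [gmap, dif_pos hcardG]
  set a' := fun i => ((gset n k m (a, b)).orderEmbOfFin hcardG i : ℕ) with ha'_def
  have ha'mono : StrictMono a' := ((gset n k m (a, b)).orderEmbOfFin hcardG).strictMono
  have ha'mem : ∀ i, a' i ∈ gset n k m (a, b) :=
    fun i => Finset.orderEmbOfFin_mem _ hcardG i
  have ha'img : Finset.image a' Finset.univ = gset n k m (a, b) := by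
    ext v
    simp only [Finset.mem_image, Finset.mem_univ, true_and]
    constructor
    · rintro ⟨i, rfl⟩; exact ha'mem i
    · intro hv
      have : v ∈ Set.range ((gset n k m (a, b)).orderEmbOfFin hcardG) := by
        rw [Finset.range_orderEmbOfFin]; exact hv
      obtain ⟨i, hi⟩ := this
      exact ⟨i, hi⟩
  -- counting machinery
  have hBfil : ∀ i : Fin n, B.filter (fun x => x ≤ b i) = Finset.image b (Finset.Iic i) := by
    intro i; ext v
    simp only [Finset.mem_filter, hB_def, Finset.mem_image, Finset.mem_univ, true_and,
      Finset.mem_Iic]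
    constructor
    · rintro ⟨⟨j, rfl⟩, hle⟩
      exact ⟨j, hb.le_iff_le.1 hle, rfl⟩
    · rintro ⟨j, hj, rfl⟩
      exact ⟨⟨j, rfl⟩, hb.monotone hj⟩
  have hcardBfil : ∀ i : Fin n, (B.filter (fun x => x ≤ b i)).card = (i : ℕ) + 1 := by
    intro i
    rw [hBfil, Finset.card_image_of_injective _ hb.injective, Fin.card_Iic]
  have hSfil : ∀ i : Fin n, S.filter (fun x => x ≤ b i) = Finset.Icc (m + 1) (b i) := by
    intro i; ext v
    simp only [Finset.mem_filter, hS_def, Finset.mem_Icc]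
    have := (hbIcc i).2
    constructor
    · rintro ⟨⟨h1, h2⟩, h3⟩; exact ⟨h1, h3⟩
    · rintro ⟨h1, h3⟩; exact ⟨⟨h1, by omega⟩, h3⟩
  have hAfil : ∀ i : Fin n, A.filter (fun x => x ≤ b i)
      = Finset.Icc (m + 1) (b i) \ B.filter (fun x => x ≤ b i) := by
    intro i
    rw [← hSfil i, hA_def]
    ext v
    simp only [Finset.mem_filter, Finset.mem_sdiff]
    tauto
  have hcardAfil : ∀ i : Fin n, (A.filter (fun x => x ≤ b i)).card + ((i : ℕ) + 1)
      = b i + 1 - (m + 1) := by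
    intro i
    have hsub : B.filter (fun x => x ≤ b i) ⊆ Finset.Icc (m + 1) (b i) := by
      rw [← hSfil i]
      exact Finset.filter_subset_filter _ hBS
    have hlb : (i : ℕ) + 1 ≤ (Finset.Icc (m + 1) (b i)).card := by
      have := Finset.card_le_card hsub
      rw [hcardBfil] at this
      exact this
    rw [Nat.card_Icc] at hlb
    rw [hAfil i, Finset.card_sdiff_of_subset hsub, Nat.card_Icc, hcardBfil]
    omega
  have himgfil : ∀ (f : Fin n → Fin n), Function.Injective f → ∀ (E : Finset (Fin n)) (i : Fin n),
      ((E.image (fun l => b (f l))).filter (fun x => x ≤ b i)).card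
        = (E.filter (fun l => f l ≤ i)).card := by
    intro f hf E i
    have hinj : Function.Injective (fun l : Fin n => b (f l)) :=
      fun x y h => hf (hb.injective h)
    rw [Finset.filter_image, Finset.card_image_of_injective _ hinj]
    congr 1
    apply Finset.filter_congr
    intro l _
    show b (f l) ≤ b i ↔ f l ≤ i
    exact ⟨fun h => hb.le_iff_le.1 h, fun h => hb.monotone h⟩
  have hcG : ∀ i : Fin n, ((gset n k m (a, b)).filter (fun x => x ≤ b i)).card
      = (A.filter (fun x => x ≤ b i)).card + (D.filter (fun l => rot l ≤ i)).card := by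
    intro i
    rw [hgset, Finset.filter_union,
      Finset.card_union_of_disjoint (Finset.disjoint_filter_filter hdisj), hbD'_def,
      himgfil rot rot_inj D i]
  have hcR1 : ∀ i : Fin n, (R1.filter (fun x => x ≤ b i)).card
      = (A.filter (fun x => x ≤ b i)).card + (D.filter (fun l => l ≤ i)).card := by
    intro i
    rw [hR1eq, Finset.filter_union,
      Finset.card_union_of_disjoint (Finset.disjoint_filter_filter (hAB.mono_right (by
        intro v hv
        obtain ⟨j, _, rfl⟩ := Finset.mem_image.1 hv
        exact Finset.mem_image_of_mem b (Finset.mem_univ j))))]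
    congr 1
    have := himgfil id Function.injective_id D i
    simpa using this
  have hlowR1 : ∀ i j : Fin n, a j ≤ b i
      → (j : ℕ) + 1 ≤ (R1.filter (fun x => x ≤ b i)).card := by
    intro i j hji
    have hsub : Finset.image a (Finset.Iic j) ⊆ R1.filter (fun x => x ≤ b i) := by
      intro v hv
      obtain ⟨l, hl, rfl⟩ := Finset.mem_image.1 hv
      exact Finset.mem_filter.2 ⟨Finset.mem_image_of_mem a (Finset.mem_univ l),
        le_trans (ha.monotone (Finset.mem_Iic.1 hl)) hji⟩
    have := Finset.card_le_card hsub
    rwa [Finset.card_image_of_injective _ ha.injective, Fin.card_Iic] at this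
  have hkey : ∀ i j : Fin n, (j : ℕ) = (i : ℕ) + 1 → j ∉ D → a j ≤ b i := by
    intro i j hij hjD
    by_contra hcon
    push_neg at hcon
    have hjlt := j.isLt
    have hbiM : b i < m + 2 * n - k := by
      have h1 : b i < b ⟨n - 1, by omega⟩ := hb (by rw [Fin.lt_def]; simp; omega)
      omega
    have hbmem : b i + 1 ∈ S := Finset.mem_Icc.2 ⟨by have := (hbIcc i).1; omega, by omega⟩
    rw [← hUf] at hbmem
    have haj : a j = b i + 1 := by
      rcases Finset.mem_union.1 hbmem with h | h
      · obtain ⟨l, _, hl⟩ := Finset.mem_image.1 h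
        have hil : i < l := by
          apply ha.lt_iff_lt.1
          have := hcol i
          omega
        have hjl : j ≤ l := by
          rw [Fin.le_def]
          rw [Fin.lt_def] at hil
          omega
        have := ha.monotone hjl
        omega
      · obtain ⟨l, _, hl⟩ := Finset.mem_image.1 h
        have hil : i < l := by
          apply hb.lt_iff_lt.1
          omega
        have hjl : j ≤ l := by
          rw [Fin.le_def]
          rw [Fin.lt_def] at hil
          omega
        have h1 := hb.monotone hjl
        have h2 := hcol j
        omega
    obtain ⟨l, hl⟩ := hprime i j hij haj
    exact hjD (Finset.mem_filter.2 ⟨Finset.mem_univ j,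
      Finset.mem_image.2 ⟨l, Finset.mem_univ l, hl⟩⟩)
  have hrotcount : ∀ i j : Fin n, (j : ℕ) = (i : ℕ) + 1 →
      (D.filter (fun l => rot l ≤ i)).card + (if (⟨0, hn⟩ : Fin n) ∈ D then 1 else 0)
        = (D.filter (fun l => l ≤ i)).card + (if j ∈ D then 1 else 0) := by
    intro i j hij
    have hin : (i : ℕ) + 1 < n := by have := j.isLt; omega
    rw [Finset.card_filter, Finset.card_filter,
      ← Finset.sum_ite_eq' D (⟨0, hn⟩ : Fin n) (fun _ => 1),
      ← Finset.sum_ite_eq' D j (fun _ => 1),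
      ← Finset.sum_add_distrib, ← Finset.sum_add_distrib]
    apply Finset.sum_congr rfl
    intro l _
    have hl := l.isLt
    have h0eq : (l = (⟨0, hn⟩ : Fin n)) = ((l : ℕ) = 0) := by
      simp [Fin.ext_iff]
    have hjeq : (l = j) = ((l : ℕ) = (i : ℕ) + 1) := by
      simp [Fin.ext_iff]; omega
    by_cases h0 : (l : ℕ) = 0
    · have hr := rot_val_zero l h0
      have hc1 : ¬ (rot l ≤ i) := by rw [Fin.le_def, hr]; omega
      have hc2 : l = (⟨0, hn⟩ : Fin n) := by rw [h0eq]; exact h0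
      have hc3 : l ≤ i := by rw [Fin.le_def, h0]; omega
      have hc4 : ¬ (l = j) := by rw [hjeq]; omega
      rw [if_neg hc1, if_pos hc2, if_pos hc3, if_neg hc4]
      omega
    · have hr := rot_val_pos l h0
      have hc2 : ¬ (l = (⟨0, hn⟩ : Fin n)) := by rw [h0eq]; exact h0
      rw [if_neg hc2]
      by_cases hli : (l : ℕ) = (i : ℕ) + 1
      · have hc1 : rot l ≤ i := by rw [Fin.le_def, hr]; omega
        have hc3 : ¬ (l ≤ i) := by rw [Fin.le_def]; omega
        have hc4 : l = j := by rw [hjeq]; exact hli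
        rw [if_pos hc1, if_neg hc3, if_pos hc4]
        omega
      · have hc4 : ¬ (l = j) := by rw [hjeq]; exact hli
        rw [if_neg hc4]
        have : (rot l ≤ i) ↔ (l ≤ i) := by
          rw [Fin.le_def, Fin.le_def, hr]
          omega
        by_cases hc : l ≤ i
        · rw [if_pos hc, if_pos (this.2 hc)]
        · rw [if_neg hc, if_neg (fun h => hc (this.1 h))]
  have hmain : ∀ i j : Fin n, (j : ℕ) = (i : ℕ) + 1 →
      (i : ℕ) + 2 ≤ ((gset n k m (a, b)).filter (fun x => x ≤ b i)).card
        + (if (⟨0, hn⟩ : Fin n) ∈ D then 1 else 0) := by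
    intro i j hij
    have h1 := hcG i
    have h2 := hcR1 i
    have h3 := hrotcount i j hij
    by_cases hjD : j ∈ D
    · have h4 := hlowR1 i i (hcol i)
      rw [if_pos hjD] at h3
      omega
    · have h4 := hlowR1 i j (hkey i j hij hjD)
      rw [if_neg hjD] at h3
      rw [hij] at h4
      omega
  have hcol' : ∀ i : Fin n, a' i ≤ b i := by
    intro i
    by_cases hi : (i : ℕ) = n - 1
    · have h1 : a' i ∈ S := hGS (ha'mem i)
      have h2 := (Finset.mem_Icc.1 h1).2
      have h3 : b i = m + 2 * n - k := by
        rw [show i = (⟨n - 1, by omega⟩ : Fin n) from Fin.ext hi]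
        exact hblast
      omega
    · have hin : (i : ℕ) + 1 < n := by have := i.isLt; omega
      have := hmain i ⟨(i : ℕ) + 1, hin⟩ rfl
      have hite : (if (⟨0, hn⟩ : Fin n) ∈ D then 1 else 0) ≤ 1 := by split_ifs <;> omega
      rw [ha'_def, orderEmb_le_iff]
      omega
  have hcond2 : (¬ ∃ jj, a jj = b ⟨0, hn⟩) →
      ∀ i j : Fin n, (j : ℕ) = (i : ℕ) + 1 → a' j ≤ b i := by
    intro h0 i j hij
    have h0D : (⟨0, hn⟩ : Fin n) ∉ D := by
      intro hmem
      obtain ⟨l, _, hl⟩ := Finset.mem_image.1 (Finset.mem_filter.1 hmem).2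
      exact h0 ⟨l, hl⟩
    have := hmain i j hij
    rw [if_neg h0D] at this
    rw [ha'_def, orderEmb_le_iff]
    omega
  have h0D_iff : (∃ jj, a jj = b ⟨0, hn⟩) ↔ (⟨0, hn⟩ : Fin n) ∈ D := by
    constructor
    · rintro ⟨l, hl⟩
      exact Finset.mem_filter.2 ⟨Finset.mem_univ _,
        Finset.mem_image.2 ⟨l, Finset.mem_univ l, hl⟩⟩
    · intro hmem
      obtain ⟨l, _, hl⟩ := Finset.mem_image.1 (Finset.mem_filter.1 hmem).2
      exact ⟨l, hl⟩
  have hMinG : (⟨0, hn⟩ : Fin n) ∈ D ↔ (m + 2 * n - k) ∈ gset n k m (a, b) := by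
    constructor
    · intro h
      rw [hgset]
      apply Finset.mem_union_right
      refine Finset.mem_image.2 ⟨⟨0, hn⟩, h, ?_⟩
      have hr : rot (⟨0, hn⟩ : Fin n) = ⟨n - 1, by omega⟩ := Fin.ext (rot_val_zero _ rfl)
      rw [hr, hblast]
    · intro h
      rw [hgset] at h
      rcases Finset.mem_union.1 h with h | h
      · exfalso
        apply (Finset.mem_sdiff.1 h).2
        rw [← hblast]
        exact Finset.mem_image_of_mem b (Finset.mem_univ _)
      · obtain ⟨l, hlD, hl⟩ := Finset.mem_image.1 h
        have hbl : b (rot l) = b ⟨n - 1, by omega⟩ := by rw [hl, hblast]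
        have hrl : rot l = ⟨n - 1, by omega⟩ := hb.injective hbl
        have hl0 : (l : ℕ) = 0 := by
          by_contra h0
          have h1 := rot_val_pos l h0
          have h2 := l.isLt
          rw [Fin.ext_iff] at hrl
          simp at hrl
          omega
        rwa [show l = (⟨0, hn⟩ : Fin n) from Fin.ext hl0] at hlD
  have hcond3 : (∃ jj, a jj = b ⟨0, hn⟩)
      ↔ a' ⟨n - 1, by omega⟩ = b ⟨n - 1, by omega⟩ := by
    rw [h0D_iff, hMinG, hblast]
    constructor
    · intro h
      have hmem : (m + 2 * n - k) ∈ Finset.image a' Finset.univ := by rw [ha'img]; exact h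
      obtain ⟨i, _, hi⟩ := Finset.mem_image.1 hmem
      have h1 : a' i ≤ a' ⟨n - 1, by omega⟩ := ha'mono.monotone (hlast i)
      have h2 : a' ⟨n - 1, by omega⟩ ∈ S := hGS (ha'mem _)
      have h3 := (Finset.mem_Icc.1 h2).2
      omega
    · intro h
      have := ha'mem ⟨n - 1, by omega⟩
      rwa [h] at this
  -- maj / amaj
  have hmajset : maj (gmap n k m (a, b))
      = ∑ v ∈ (gset n k m (a, b)).filter (fun v => v + 1 ∈ B), v := by
    rw [hgmap]
    unfold maj
    simp only
    rw [ha'img]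
    congr 1
    apply Finset.filter_congr
    intro v _
    constructor
    · rintro ⟨j, hj⟩; exact Finset.mem_image.2 ⟨j, Finset.mem_univ j, hj⟩
    · intro h; obtain ⟨j, _, hj⟩ := Finset.mem_image.1 h; exact ⟨j, hj⟩
  have hamajset : amaj (a, b)
      = ∑ v ∈ B.filter (fun v => v + 1 ∈ A), v
        + ∑ v ∈ B.filter (fun v => v + 1 ∈ Finset.image b D), v := by
    unfold amaj
    simp only
    have e1 : (Finset.image b Finset.univ).filter (fun v => ∃ j, a j = v + 1)
        = B.filter (fun v => v + 1 ∈ R1) := by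
      apply Finset.filter_congr
      intro v _
      constructor
      · rintro ⟨j, hj⟩; exact Finset.mem_image.2 ⟨j, Finset.mem_univ j, hj⟩
      · intro h; obtain ⟨j, _, hj⟩ := Finset.mem_image.1 h; exact ⟨j, hj⟩
    have e2 : B.filter (fun v => v + 1 ∈ R1)
        = B.filter (fun v => v + 1 ∈ A) ∪ B.filter (fun v => v + 1 ∈ Finset.image b D) := by
      rw [hR1eq]
      ext v
      simp only [Finset.mem_filter, Finset.mem_union]
      tauto
    have hdisj2 : Disjoint (B.filter (fun v => v + 1 ∈ A))
        (B.filter (fun v => v + 1 ∈ Finset.image b D)) := by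
      rw [Finset.disjoint_left]
      intro v hv1 hv2
      have h1 := (Finset.mem_filter.1 hv1).2
      have h2 := (Finset.mem_filter.1 hv2).2
      have h3 : v + 1 ∈ B := by
        obtain ⟨j, _, hj⟩ := Finset.mem_image.1 h2
        rw [← hj]
        exact Finset.mem_image_of_mem b (Finset.mem_univ j)
      exact (Finset.mem_sdiff.1 h1).2 h3
    rw [e1, e2, Finset.sum_union hdisj2]
  have hmajsplit : maj (gmap n k m (a, b))
      = ∑ v ∈ A.filter (fun v => v + 1 ∈ B), v
        + ∑ v ∈ bD'.filter (fun v => v + 1 ∈ B), v := by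
    rw [hmajset, hgset, Finset.filter_union,
      Finset.sum_union (Finset.disjoint_filter_filter hdisj)]
  have hC1 : bD'.filter (fun v => v + 1 ∈ B)
      = B.filter (fun v => v + 1 ∈ Finset.image b D) := by
    ext v
    simp only [Finset.mem_filter]
    constructor
    · rintro ⟨hv, hv1⟩
      obtain ⟨l, hlD, rfl⟩ := Finset.mem_image.1 hv
      have hl0 : (l : ℕ) ≠ 0 := by
        intro h0
        have hrr : rot l = ⟨n - 1, by omega⟩ := Fin.ext (rot_val_zero l h0)
        rw [hrr, hblast] at hv1
        obtain ⟨j, _, hj⟩ := Finset.mem_image.1 hv1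
        have := (hbIcc j).2
        omega
      obtain ⟨l', _, hl'⟩ := Finset.mem_image.1 hv1
      have hrot : (rot l : ℕ) = (l : ℕ) - 1 := rot_val_pos l hl0
      have hrlt : rot l < l := by rw [Fin.lt_def, hrot]; omega
      have h5 : b (rot l) < b l := hb hrlt
      have h2 : rot l < l' := hb.lt_iff_lt.1 (by omega)
      have h3 : l ≤ l' := by
        rw [Fin.le_def]
        rw [Fin.lt_def, hrot] at h2
        omega
      have h4 : b l ≤ b l' := hb.monotone h3
      have hbl : b l' = b l := by omega
      have hll : l' = l := hb.injective hbl
      constructor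
      · exact Finset.mem_image_of_mem b (Finset.mem_univ _)
      · refine Finset.mem_image.2 ⟨l, hlD, ?_⟩
        omega
    · rintro ⟨hv, hv1⟩
      obtain ⟨j, _, rfl⟩ := Finset.mem_image.1 hv
      obtain ⟨l, hlD, hl⟩ := Finset.mem_image.1 hv1
      have hjl : j < l := hb.lt_iff_lt.1 (by omega)
      have hl0 : (l : ℕ) ≠ 0 := by rw [Fin.lt_def] at hjl; omega
      have hrot : (rot l : ℕ) = (l : ℕ) - 1 := rot_val_pos l hl0
      have h1 : j ≤ rot l := by
        rw [Fin.le_def, hrot]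
        rw [Fin.lt_def] at hjl
        omega
      have h2 : rot l < l := by rw [Fin.lt_def, hrot]; omega
      have h3 : b j ≤ b (rot l) := hb.monotone h1
      have h4 : b (rot l) < b l := hb h2
      have hbj : b (rot l) = b j := by omega
      constructor
      · exact Finset.mem_image.2 ⟨l, hlD, hbj⟩
      · exact Finset.mem_image.2 ⟨l, Finset.mem_univ l, hl⟩
  have hApred : A.filter (fun v => v + 1 ∈ B) = A.filter (fun v => v + 1 ∉ A) := by
    apply Finset.filter_congr
    intro v hv
    have hvS := Finset.mem_Icc.1 (hAS hv)
    have hvB : v ∉ B := (Finset.mem_sdiff.1 hv).2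
    have hvM : v ≠ m + 2 * n - k := by
      intro h
      apply hvB
      rw [h, ← hblast]
      exact Finset.mem_image_of_mem b (Finset.mem_univ _)
    have hv1S : v + 1 ∈ S := Finset.mem_Icc.2 ⟨by omega, by omega⟩
    constructor
    · intro h hA'
      exact (Finset.mem_sdiff.1 hA').2 h
    · intro h
      by_contra hB'
      exact h (Finset.mem_sdiff.2 ⟨hv1S, hB'⟩)
  have hBA : B.filter (fun v => v + 1 ∈ A)
      = Finset.image (fun w => w - 1) (A.filter (fun w => m + 1 < w ∧ w - 1 ∉ A)) := by
    ext v
    constructor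
    · intro hv
      obtain ⟨hvB, hv1⟩ := Finset.mem_filter.1 hv
      have hvm : m + 1 ≤ v := (Finset.mem_Icc.1 (hBS hvB)).1
      refine Finset.mem_image.2 ⟨v + 1, Finset.mem_filter.2 ⟨hv1, by omega, ?_⟩, by omega⟩
      have he : v + 1 - 1 = v := by omega
      rw [he]
      intro hA'
      exact (Finset.mem_sdiff.1 hA').2 hvB
    · intro hv
      obtain ⟨w, hw, rfl⟩ := Finset.mem_image.1 hv
      obtain ⟨hwA, hwm, hw1⟩ := Finset.mem_filter.1 hw
      have hwS := Finset.mem_Icc.1 (hAS hwA)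
      have hw1S : w - 1 ∈ S := Finset.mem_Icc.2 ⟨by omega, by omega⟩
      have hw1B : w - 1 ∈ B := by
        by_contra hB'
        exact hw1 (Finset.mem_sdiff.2 ⟨hw1S, hB'⟩)
      refine Finset.mem_filter.2 ⟨hw1B, ?_⟩
      have he : w - 1 + 1 = w := by omega
      rw [he]
      exact hwA
  have hYsum : ∑ v ∈ B.filter (fun v => v + 1 ∈ A), v
      = ∑ w ∈ A.filter (fun w => m + 1 < w ∧ w - 1 ∉ A), (w - 1) := by
    rw [hBA]
    apply Finset.sum_image
    intro x hx y hy hxy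
    have hx' := Finset.mem_Icc.1 (hAS (Finset.mem_filter.1 hx).1)
    have hy' := Finset.mem_Icc.1 (hAS (Finset.mem_filter.1 hy).1)
    simp only at hxy
    omega
  have htel : ∑ v ∈ A.filter (fun v => v + 1 ∉ A), v
      = ∑ w ∈ A.filter (fun w => w - 1 ∉ A), (w - 1) + A.card :=
    telescope A (fun w hw => by have := Finset.mem_Icc.1 (hAS hw); omega)
  have hb0iff : (a ⟨0, hn⟩ = b ⟨0, hn⟩) ↔ (m + 1) ∈ B := by
    rw [ha0]
    constructor
    · intro h
      rw [h]
      exact Finset.mem_image_of_mem b (Finset.mem_univ _)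
    · intro h
      obtain ⟨j, _, hj⟩ := Finset.mem_image.1 h
      have h1 := hb.monotone (hzle j)
      have h2 := (hbIcc ⟨0, hn⟩).1
      omega
  have hfinal : maj (gmap n k m (a, b)) = ∑ v ∈ A.filter (fun v => v + 1 ∉ A), v
        + ∑ v ∈ B.filter (fun v => v + 1 ∈ Finset.image b D), v := by
    rw [hmajsplit, hApred, hC1]
  refine ⟨by rw [hgmap], by rw [hgmap]; exact ha'img, ?_, ?_, ?_, ?_, ?_, ?_, ?_⟩
  · -- M3
    rw [hgset]
    ext v
    constructor
    · intro hv
      obtain ⟨hv1, hv2⟩ := Finset.mem_inter.1 hv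
      rcases Finset.mem_union.1 hv1 with h | h
      · exact absurd hv2 (Finset.mem_sdiff.1 h).2
      · exact h
    · intro hv
      exact Finset.mem_inter.2 ⟨Finset.mem_union_right _ hv, hbD'B hv⟩
  · -- M4
    exact hR1eq
  · -- RIncM membership
    rw [hgmap]
    refine ⟨?_, hb, hcol', ?_⟩
    · exact ((gset n k m (a, b)).orderEmbOfFin hcardG).strictMono
    · have hGB : gset n k m (a, b) ∪ B = S := by
        apply Finset.Subset.antisymm
        · exact Finset.union_subset hGS hBS
        · intro v hv
          by_cases hvB : v ∈ B
          · exact Finset.mem_union_right _ hvB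
          · apply Finset.mem_union_left
            rw [hgset]
            exact Finset.mem_union_left _ (Finset.mem_sdiff.2 ⟨hv, hvB⟩)
      have hr1 : Set.range a' = ↑(gset n k m (a, b)) := by
        rw [ha'_def]
        exact Finset.range_orderEmbOfFin _ hcardG
      have hr2 : Set.range b = ↑B := by
        rw [hB_def]
        simp
      rw [hr1, hr2, ← Finset.coe_union, hGB, hS_def, Finset.coe_Icc]
  · -- cond 2
    intro h0 i j hij
    rw [hgmap]
    exact hcond2 h0 i j hij
  · -- cond 3
    rw [hgmap]
    exact hcond3
  · -- cond 4a
    intro heq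
    have hmB : (m + 1) ∈ B := hb0iff.1 heq
    have hmA : (m + 1) ∉ A := fun h => (Finset.mem_sdiff.1 h).2 hmB
    have hYY' : ∑ w ∈ A.filter (fun w => m + 1 < w ∧ w - 1 ∉ A), (w - 1)
        = ∑ w ∈ A.filter (fun w => w - 1 ∉ A), (w - 1) := by
      congr 1
      apply Finset.filter_congr
      intro w hw
      have hwS := Finset.mem_Icc.1 (hAS hw)
      constructor
      · intro h; exact h.2
      · intro h
        refine ⟨?_, h⟩
        rcases Nat.lt_or_ge (m + 1) w with h' | h'
        · exact h'
        · exfalso; apply hmA; rwa [show m + 1 = w by omega]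
    rw [hfinal, htel, hamajset, hYsum, hYY', hcardA]
    ring
  · -- cond 4b
    intro hne
    have hmB : (m + 1) ∉ B := fun h => hne (hb0iff.2 h)
    have hmA : (m + 1) ∈ A := Finset.mem_sdiff.2 ⟨Finset.mem_Icc.2 ⟨le_refl _, hm1M⟩, hmB⟩
    have hsplit : A.filter (fun w => w - 1 ∉ A)
        = insert (m + 1) (A.filter (fun w => m + 1 < w ∧ w - 1 ∉ A)) := by
      ext w
      simp only [Finset.mem_insert, Finset.mem_filter]
      constructor
      · rintro ⟨hwA, hw1⟩
        by_cases hw : w = m + 1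
        · exact Or.inl hw
        · have hwS := Finset.mem_Icc.1 (hAS hwA)
          exact Or.inr ⟨hwA, by omega, hw1⟩
      · rintro (rfl | ⟨hwA, _, hw1⟩)
        · refine ⟨hmA, ?_⟩
          intro hmem
          have := Finset.mem_Icc.1 (hAS hmem)
          omega
        · exact ⟨hwA, hw1⟩
    have hnotmem : (m + 1) ∉ A.filter (fun w => m + 1 < w ∧ w - 1 ∉ A) := by
      intro h
      have := (Finset.mem_filter.1 h).2.1
      omega
    have hY' : ∑ w ∈ A.filter (fun w => w - 1 ∉ A), (w - 1)
        = m + ∑ w ∈ A.filter (fun w => m + 1 < w ∧ w - 1 ∉ A), (w - 1) := by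
      rw [hsplit, Finset.sum_insert hnotmem]
      omega
    rw [hfinal, htel, hamajset, hYsum, hY', hcardA]
    ring

end GInj

/-- There is an injection g : pRInc^m_k(2×n) → RInc^m_k(2×n) preserving row 2, such that:
if T_{2,1} appears only once then g(T)_{1,i+1} ≤ g(T)_{2,i} for all i;
T_{2,1} appears twice iff g(T)_{1,n} = g(T)_{2,n};
and maj(g(T)) = amaj(T) + n − k if T_{1,1} = T_{2,1},
while maj(g(T)) = amaj(T) + m + n − k if T_{1,1} ≠ T_{2,1}. -/
theorem g_injection (n k m : ℕ) (hn : 1 ≤ n) (hk : k ≤ n) :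
    ∃ g : ((Fin n → ℕ) × (Fin n → ℕ)) → ((Fin n → ℕ) × (Fin n → ℕ)),
      Set.InjOn g (pRIncM n k m) ∧
      Set.MapsTo g (pRIncM n k m) (RIncM n k m) ∧
      ∀ T ∈ pRIncM n k m,
        (g T).2 = T.2 ∧
        ((¬ ∃ j, T.1 j = T.2 ⟨0, hn⟩) →
          ∀ i j : Fin n, (j : ℕ) = (i : ℕ) + 1 → (g T).1 j ≤ (g T).2 i) ∧
        ((∃ j, T.1 j = T.2 ⟨0, hn⟩) ↔
          (g T).1 ⟨n - 1, by omega⟩ = (g T).2 ⟨n - 1, by omega⟩) ∧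
        (T.1 ⟨0, hn⟩ = T.2 ⟨0, hn⟩ → maj (g T) = amaj T + (n - k)) ∧
        (T.1 ⟨0, hn⟩ ≠ T.2 ⟨0, hn⟩ → maj (g T) = amaj T + m + (n - k)) := by
  refine ⟨GInj.gmap n k m, ?_, ?_, ?_⟩
  · -- injectivity
    intro T hT U hU hTU
    obtain ⟨hT2, hTimg, hTint, hTR1, _, _, _, _, _⟩ := GInj.master hn hk T hT
    obtain ⟨hU2, hUimg, hUint, hUR1, _, _, _, _, _⟩ := GInj.master hn hk U hU
    have hb : T.2 = U.2 := by rw [← hT2, ← hU2, hTU]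
    have hgs : GInj.gset n k m T = GInj.gset n k m U := by
      rw [← hTimg, ← hUimg, hTU]
    have hbmono : StrictMono T.2 := hT.1.2.1
    have hinj : Function.Injective (fun l : Fin n => T.2 (GInj.rot l)) :=
      fun x y h => GInj.rot_inj (hbmono.injective h)
    have hDeq : GInj.Dset n T = GInj.Dset n U := by
      apply Finset.image_injective hinj
      have h2 : Finset.image (fun l => T.2 (GInj.rot l)) (GInj.Dset n U)
          = Finset.image (fun l => U.2 (GInj.rot l)) (GInj.Dset n U) := by rw [hb]
      rw [← hTint, h2, ← hUint, hgs, hb]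
    have hR1img : Finset.image T.1 Finset.univ = Finset.image U.1 Finset.univ := by
      rw [hTR1, hUR1, hb, hDeq]
    have hcard : (Finset.image T.1 Finset.univ).card = n := by
      rw [Finset.card_image_of_injective _ hT.1.1.injective]; simp
    have e1 : T.1 = (Finset.image T.1 Finset.univ).orderEmbOfFin hcard :=
      Finset.orderEmbOfFin_unique hcard
        (fun i => Finset.mem_image_of_mem _ (Finset.mem_univ i)) hT.1.1
    have e2 : U.1 = (Finset.image T.1 Finset.univ).orderEmbOfFin hcard :=
      Finset.orderEmbOfFin_unique hcard
        (fun i => by rw [hR1img]; exact Finset.mem_image_of_mem _ (Finset.mem_univ i)) hU.1.1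
    exact Prod.ext (e1.trans e2.symm) hb
  · -- maps to
    intro T hT
    exact (GInj.master hn hk T hT).2.2.2.2.1
  · -- conditions
    intro T hT
    obtain ⟨h1, _, _, _, _, h6, h7, h8, h9⟩ := GInj.master hn hk T hT
    exact ⟨h1, h6, h7, h8, h9⟩
end

section
/- For every positive integer n and every integer k with 0 ≤ k ≤ n, there is a bijection between RInc_k(2×n) and the set of Schröder words of length 2n−k with exactly k letters equal to 1, n−k letters equal to 0 and n−k letters equal to 2, such that every prefix contains at least as many 0's as 2's: namely, the map θ sending T to the word w = w_1 ⋯ w_{2n−k} where w_i = 0 if i appears only in row 1 of T, w_i = 2 if i appears only in row 2 of T, and w_i = 1 if i appears in both rows of T. In particular the two sets have the same cardinality. -/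
/-- Row-increasing tableaux of shape 2×n with entry set `{1, …, 2n−k}`:
rows strictly increasing, columns weakly increasing. -/
def RInc (n k : ℕ) : Set ((Fin n → ℕ) × (Fin n → ℕ)) :=
  {T | StrictMono T.1 ∧ StrictMono T.2 ∧ (∀ i, T.1 i ≤ T.2 i) ∧
    Set.range T.1 ∪ Set.range T.2 = Set.Icc 1 (2 * n - k)}

/-- Schröder words of length 2n−k over {0,1,2} (encoded as `Fin 3`), with k letters 1,
n−k letters 0, n−k letters 2, and every prefix having at least as many 0's as 2's. -/
def SchroederWords (n k : ℕ) : Set (Fin (2 * n - k) → Fin 3) :=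
  {w | (Finset.univ.filter (fun i : Fin (2 * n - k) => w i = 1)).card = k ∧
       (Finset.univ.filter (fun i : Fin (2 * n - k) => w i = 0)).card = n - k ∧
       (Finset.univ.filter (fun i : Fin (2 * n - k) => w i = 2)).card = n - k ∧
       ∀ j : ℕ, (Finset.univ.filter (fun i : Fin (2 * n - k) => (i : ℕ) < j ∧ w i = 2)).card ≤
                (Finset.univ.filter (fun i : Fin (2 * n - k) => (i : ℕ) < j ∧ w i = 0)).card}

/-- The reading map θ: position i (1-indexed value i+1 for `i : Fin (2n−k)`) is sent to
1 if the value appears in both rows, 0 if only in row 1, and 2 otherwise. -/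
def theta (n k : ℕ) (T : (Fin n → ℕ) × (Fin n → ℕ)) : Fin (2 * n - k) → Fin 3 :=
  fun i =>
    if (∃ j, T.1 j = (i : ℕ) + 1) ∧ (∃ j, T.2 j = (i : ℕ) + 1) then 1
    else if ∃ j, T.1 j = (i : ℕ) + 1 then 0
    else 2

open Finset

private lemma fin3_cases (x : Fin 3) : x = 0 ∨ x = 1 ∨ x = 2 := by
  fin_cases x <;> simp

private lemma card_filter_fin_eq (N : ℕ) (p : ℕ → Prop) [DecidablePred p] :
    (univ.filter (fun i : Fin N => p ((i : ℕ) + 1))).card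
      = ((Finset.Icc 1 N).filter p).card := by
  apply Finset.card_bij (fun (i : Fin N) _ => (i : ℕ) + 1)
  · intro i hi
    simp only [mem_filter, mem_univ, true_and] at hi ⊢
    exact ⟨Finset.mem_Icc.2 ⟨by omega, by omega⟩, hi⟩
  · intro i _ j _ h
    exact Fin.ext (by omega)
  · intro v hv
    simp only [mem_filter, Finset.mem_Icc] at hv
    refine ⟨⟨v - 1, by omega⟩, ?_, show v - 1 + 1 = v by omega⟩
    simp only [mem_filter, mem_univ, true_and]
    have hv1 : v - 1 + 1 = v := by omega
    simpa [hv1] using hv.2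

private lemma card_filter_ne0 {ι : Type*} [DecidableEq ι] (s : Finset ι) (w : ι → Fin 3) :
    (s.filter fun i => w i ≠ 0).card
      = (s.filter fun i => w i = 1).card + (s.filter fun i => w i = 2).card := by
  rw [← card_union_of_disjoint (Finset.disjoint_filter.2
        (by intro i _ h1 h2; rw [h1] at h2; exact absurd h2 (by decide))),
      ← filter_or]
  apply congrArg
  apply filter_congr
  intro i _
  have := fin3_cases (w i)
  constructor
  · intro h; rcases this with h'|h'|h' <;> simp_all
  · rintro (h|h) <;> rw [h] <;> decide

private lemma card_filter_ne2 {ι : Type*} [DecidableEq ι] (s : Finset ι) (w : ι → Fin 3) :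
    (s.filter fun i => w i ≠ 2).card
      = (s.filter fun i => w i = 0).card + (s.filter fun i => w i = 1).card := by
  rw [← card_union_of_disjoint (Finset.disjoint_filter.2
        (by intro i _ h1 h2; rw [h1] at h2; exact absurd h2 (by decide))),
      ← filter_or]
  apply congrArg
  apply filter_congr
  intro i _
  have := fin3_cases (w i)
  constructor
  · intro h; rcases this with h'|h'|h' <;> simp_all
  · rintro (h|h) <;> rw [h] <;> decide

private lemma orderEmb_le_of_counts {n : ℕ} {A B : Finset ℕ} (hA : A.card = n) (hB : B.card = n)
    (h : ∀ j, (B.filter (· ≤ j)).card ≤ (A.filter (· ≤ j)).card) (i : Fin n) :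
    A.orderEmbOfFin hA i ≤ B.orderEmbOfFin hB i := by
  set x := B.orderEmbOfFin hB i with hx
  by_contra hcon
  push_neg at hcon
  have h1 : (i : ℕ) + 1 ≤ (B.filter (· ≤ x)).card := by
    have hsub : (Finset.Iic i).image (B.orderEmbOfFin hB) ⊆ B.filter (· ≤ x) := by
      intro v hv
      simp only [mem_image, Finset.mem_Iic] at hv
      obtain ⟨j, hj, rfl⟩ := hv
      exact mem_filter.2 ⟨orderEmbOfFin_mem _ _ _, (B.orderEmbOfFin hB).monotone hj⟩
    calc (i : ℕ) + 1 = (Finset.Iic i).card := (Fin.card_Iic i).symm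
      _ = ((Finset.Iic i).image (B.orderEmbOfFin hB)).card :=
          (Finset.card_image_of_injective _ (B.orderEmbOfFin hB).injective).symm
      _ ≤ _ := Finset.card_le_card hsub
  have h2 : (A.filter (· ≤ x)).card ≤ (i : ℕ) := by
    have hsub : A.filter (· ≤ x) ⊆ (Finset.Iio i).image (A.orderEmbOfFin hA) := by
      intro v hv
      simp only [mem_filter] at hv
      have : v ∈ Set.range (A.orderEmbOfFin hA) := by
        rw [Finset.range_orderEmbOfFin]; exact hv.1
      obtain ⟨j, rfl⟩ := this
      simp only [mem_image, Finset.mem_Iio]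
      refine ⟨j, ?_, rfl⟩
      have : A.orderEmbOfFin hA j < A.orderEmbOfFin hA i := lt_of_le_of_lt hv.2 hcon
      exact (A.orderEmbOfFin hA).strictMono.lt_iff_lt.1 this
    calc (A.filter (· ≤ x)).card ≤ ((Finset.Iio i).image (A.orderEmbOfFin hA)).card :=
          Finset.card_le_card hsub
      _ = (i : ℕ) := by
          rw [Finset.card_image_of_injective _ (A.orderEmbOfFin hA).injective, Fin.card_Iio]
  have := h x
  omega

private lemma strictMono_eq_of_range_eq {n : ℕ} {f g : Fin n → ℕ} (hf : StrictMono f)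
    (hg : StrictMono g) (h : Set.range f = Set.range g) : f = g := by
  have hcard : (Finset.image f univ).card = n := by
    rw [Finset.card_image_of_injective _ hf.injective]; simp
  have him : Finset.image f univ = Finset.image g univ := by
    apply Finset.coe_injective
    rw [coe_image, coe_image, coe_univ, Set.image_univ, Set.image_univ, h]
  have hcard' : (Finset.image g univ).card = n := him ▸ hcard
  have h1 := Finset.orderEmbOfFin_unique hcard' (fun x => him ▸ mem_image_of_mem _ (mem_univ x)) hf
  have h2 := Finset.orderEmbOfFin_unique hcard' (fun x => mem_image_of_mem _ (mem_univ x)) hg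
  exact h1.trans h2.symm

private lemma theta_eq_one {n k : ℕ} (T : (Fin n → ℕ) × (Fin n → ℕ)) (i : Fin (2*n-k)) :
    theta n k T i = 1 ↔ ((∃ j, T.1 j = (i:ℕ)+1) ∧ (∃ j, T.2 j = (i:ℕ)+1)) := by
  unfold theta; split_ifs with h1 h2 <;> simp_all

private lemma theta_eq_zero {n k : ℕ} (T : (Fin n → ℕ) × (Fin n → ℕ)) (i : Fin (2*n-k)) :
    theta n k T i = 0 ↔ ((∃ j, T.1 j = (i:ℕ)+1) ∧ ¬(∃ j, T.2 j = (i:ℕ)+1)) := by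
  unfold theta; split_ifs with h1 h2 <;> simp_all

private lemma theta_eq_two {n k : ℕ} (T : (Fin n → ℕ) × (Fin n → ℕ)) (i : Fin (2*n-k)) :
    theta n k T i = 2 ↔ ¬(∃ j, T.1 j = (i:ℕ)+1) := by
  unfold theta; split_ifs with h1 h2 <;> simp_all

private lemma union_eq_Icc {n k : ℕ} {T : (Fin n → ℕ) × (Fin n → ℕ)} (hT : T ∈ RInc n k) :
    Finset.image T.1 univ ∪ Finset.image T.2 univ = Finset.Icc 1 (2*n-k) := by
  apply Finset.coe_injective
  rw [coe_union, coe_image, coe_image, coe_univ, Set.image_univ, Set.image_univ, coe_Icc]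
  exact hT.2.2.2

private lemma mem_image_iff {n : ℕ} (f : Fin n → ℕ) (v : ℕ) :
    v ∈ Finset.image f univ ↔ ∃ j, f j = v := by
  simp [mem_image]

/-- master counting lemma for the three letters -/
private lemma count_one {n k : ℕ} {T : (Fin n → ℕ) × (Fin n → ℕ)} (hT : T ∈ RInc n k)
    (p : ℕ → Prop) [DecidablePred p] :
    (univ.filter fun i : Fin (2*n-k) => p ((i:ℕ)+1) ∧ theta n k T i = 1).card
      = ((Finset.image T.1 univ ∩ Finset.image T.2 univ).filter p).card := by
  have step1 : (univ.filter fun i : Fin (2*n-k) => p ((i:ℕ)+1) ∧ theta n k T i = 1)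
      = (univ.filter fun i : Fin (2*n-k) =>
          (fun v => p v ∧ (v ∈ Finset.image T.1 univ ∧ v ∈ Finset.image T.2 univ)) ((i:ℕ)+1)) := by
    apply filter_congr; intro i _
    simp only [theta_eq_one, mem_image_iff]
  rw [step1, card_filter_fin_eq (2*n-k)
    (fun v => p v ∧ (v ∈ Finset.image T.1 univ ∧ v ∈ Finset.image T.2 univ))]
  congr 1
  ext v
  simp only [mem_filter, Finset.mem_Icc, mem_inter]
  constructor
  · rintro ⟨_, hp, hm⟩; exact ⟨hm, hp⟩
  · rintro ⟨hm, hp⟩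
    refine ⟨?_, hp, hm⟩
    have : v ∈ Finset.Icc 1 (2*n-k) := union_eq_Icc hT ▸ mem_union_left _ hm.1
    exact Finset.mem_Icc.1 this

private lemma count_zero {n k : ℕ} {T : (Fin n → ℕ) × (Fin n → ℕ)} (hT : T ∈ RInc n k)
    (p : ℕ → Prop) [DecidablePred p] :
    (univ.filter fun i : Fin (2*n-k) => p ((i:ℕ)+1) ∧ theta n k T i = 0).card
      = ((Finset.image T.1 univ \ Finset.image T.2 univ).filter p).card := by
  have step1 : (univ.filter fun i : Fin (2*n-k) => p ((i:ℕ)+1) ∧ theta n k T i = 0)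
      = (univ.filter fun i : Fin (2*n-k) =>
          (fun v => p v ∧ (v ∈ Finset.image T.1 univ ∧ v ∉ Finset.image T.2 univ)) ((i:ℕ)+1)) := by
    apply filter_congr; intro i _
    simp only [theta_eq_zero, mem_image_iff]
  rw [step1, card_filter_fin_eq (2*n-k)
    (fun v => p v ∧ (v ∈ Finset.image T.1 univ ∧ v ∉ Finset.image T.2 univ))]
  congr 1
  ext v
  simp only [mem_filter, Finset.mem_Icc, mem_sdiff]
  constructor
  · rintro ⟨_, hp, hm⟩; exact ⟨hm, hp⟩
  · rintro ⟨hm, hp⟩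
    refine ⟨?_, hp, hm⟩
    have : v ∈ Finset.Icc 1 (2*n-k) := union_eq_Icc hT ▸ mem_union_left _ hm.1
    exact Finset.mem_Icc.1 this

private lemma count_two {n k : ℕ} {T : (Fin n → ℕ) × (Fin n → ℕ)} (hT : T ∈ RInc n k)
    (p : ℕ → Prop) [DecidablePred p] :
    (univ.filter fun i : Fin (2*n-k) => p ((i:ℕ)+1) ∧ theta n k T i = 2).card
      = ((Finset.image T.2 univ \ Finset.image T.1 univ).filter p).card := by
  have step1 : (univ.filter fun i : Fin (2*n-k) => p ((i:ℕ)+1) ∧ theta n k T i = 2)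
      = (univ.filter fun i : Fin (2*n-k) =>
          (fun v => p v ∧ v ∉ Finset.image T.1 univ) ((i:ℕ)+1)) := by
    apply filter_congr; intro i _
    simp only [theta_eq_two, mem_image_iff]
  rw [step1, card_filter_fin_eq (2*n-k)
    (fun v => p v ∧ v ∉ Finset.image T.1 univ)]
  congr 1
  ext v
  simp only [mem_filter, Finset.mem_Icc, mem_sdiff]
  constructor
  · rintro ⟨hIcc, hp, hm⟩
    refine ⟨⟨?_, hm⟩, hp⟩
    have : v ∈ Finset.image T.1 univ ∪ Finset.image T.2 univ := by
      rw [union_eq_Icc hT]; exact Finset.mem_Icc.2 hIcc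
    rcases mem_union.1 this with h | h
    · exact absurd h hm
    · exact h
  · rintro ⟨⟨hB, hA⟩, hp⟩
    refine ⟨?_, hp, hA⟩
    have : v ∈ Finset.Icc 1 (2*n-k) := union_eq_Icc hT ▸ mem_union_right _ hB
    exact Finset.mem_Icc.1 this

private lemma count_le {n : ℕ} {a b : Fin n → ℕ} (ha : StrictMono a) (hb : StrictMono b)
    (hab : ∀ i, a i ≤ b i) (j : ℕ) :
    ((Finset.image b univ).filter (· ≤ j)).card ≤ ((Finset.image a univ).filter (· ≤ j)).card := by
  rw [Finset.filter_image, Finset.filter_image,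
      Finset.card_image_of_injective _ hb.injective, Finset.card_image_of_injective _ ha.injective]
  apply Finset.card_le_card
  intro i hi
  simp only [mem_filter, mem_univ, true_and] at hi ⊢
  exact le_trans (hab i) hi

private lemma theta_mapsTo {n k : ℕ} (hk : k ≤ n) :
    Set.MapsTo (theta n k) (RInc n k) (SchroederWords n k) := by
  intro T hT
  obtain ⟨h1, h2, h12, hU⟩ := hT
  have hT' : T ∈ RInc n k := ⟨h1, h2, h12, hU⟩
  have hAcard : (Finset.image T.1 univ).card = n := by
    rw [card_image_of_injective _ h1.injective, card_univ, Fintype.card_fin]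
  have hBcard : (Finset.image T.2 univ).card = n := by
    rw [card_image_of_injective _ h2.injective, card_univ, Fintype.card_fin]
  have hUn : Finset.image T.1 univ ∪ Finset.image T.2 univ = Finset.Icc 1 (2*n-k) :=
    union_eq_Icc hT'
  have hNcard : (Finset.image T.1 univ ∪ Finset.image T.2 univ).card = 2*n-k := by
    rw [hUn, Nat.card_Icc]; omega
  have hunion := card_union_add_card_inter (Finset.image T.1 univ) (Finset.image T.2 univ)
  have hsd1 := card_sdiff_add_card_inter (Finset.image T.1 univ) (Finset.image T.2 univ)
  have hsd2 := card_sdiff_add_card_inter (Finset.image T.2 univ) (Finset.image T.1 univ)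
  have hic : (Finset.image T.2 univ ∩ Finset.image T.1 univ).card
      = (Finset.image T.1 univ ∩ Finset.image T.2 univ).card := by rw [inter_comm]
  have t1 := count_one hT' (fun _ => True)
  have t0 := count_zero hT' (fun _ => True)
  have t2 := count_two hT' (fun _ => True)
  simp only [true_and, filter_true] at t1 t0 t2
  refine ⟨?_, ?_, ?_, ?_⟩
  · rw [t1]; omega
  · rw [t0]; omega
  · rw [t2]; omega
  · intro j
    have e2 := count_two hT' (· ≤ j)
    have e0 := count_zero hT' (· ≤ j)
    have r2 : (univ.filter fun i : Fin (2*n-k) => (i:ℕ) < j ∧ theta n k T i = 2)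
        = (univ.filter fun i : Fin (2*n-k) => ((i:ℕ)+1 ≤ j) ∧ theta n k T i = 2) := by
      apply filter_congr; intro i _
      constructor <;> rintro ⟨h, h'⟩ <;> exact ⟨by omega, h'⟩
    have r0 : (univ.filter fun i : Fin (2*n-k) => (i:ℕ) < j ∧ theta n k T i = 0)
        = (univ.filter fun i : Fin (2*n-k) => ((i:ℕ)+1 ≤ j) ∧ theta n k T i = 0) := by
      apply filter_congr; intro i _
      constructor <;> rintro ⟨h, h'⟩ <;> exact ⟨by omega, h'⟩
    rw [r2, r0, e2, e0]
    have hBsp : (((Finset.image T.2 univ) \ (Finset.image T.1 univ)).filter (· ≤ j)).card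
          + (((Finset.image T.2 univ) ∩ (Finset.image T.1 univ)).filter (· ≤ j)).card
        = ((Finset.image T.2 univ).filter (· ≤ j)).card := by
      rw [← card_union_of_disjoint ((Finset.disjoint_sdiff_inter _ _).mono
            (filter_subset _ _) (filter_subset _ _)), ← filter_union, sdiff_union_inter]
    have hAsp : (((Finset.image T.1 univ) \ (Finset.image T.2 univ)).filter (· ≤ j)).card
          + (((Finset.image T.1 univ) ∩ (Finset.image T.2 univ)).filter (· ≤ j)).card
        = ((Finset.image T.1 univ).filter (· ≤ j)).card := by
      rw [← card_union_of_disjoint ((Finset.disjoint_sdiff_inter _ _).mono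
            (filter_subset _ _) (filter_subset _ _)), ← filter_union, sdiff_union_inter]
    have hle := count_le h1 h2 h12 j
    have hinterc : (((Finset.image T.2 univ) ∩ (Finset.image T.1 univ)).filter (· ≤ j)).card
        = (((Finset.image T.1 univ) ∩ (Finset.image T.2 univ)).filter (· ≤ j)).card := by
      rw [inter_comm]
    omega

private lemma theta_injOn {n k : ℕ} : Set.InjOn (theta n k) (RInc n k) := by
  intro T hT T' hT' heq
  have key1 : ∀ v, (∃ j, T.1 j = v) ↔ (∃ j, T'.1 j = v) := by
    intro v
    by_cases hv : 1 ≤ v ∧ v ≤ 2*n-k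
    · set i : Fin (2*n-k) := ⟨v-1, by omega⟩ with hi
      have hiv : (i:ℕ) + 1 = v := by show v - 1 + 1 = v; omega
      have a1 := theta_eq_two T i
      have a2 := theta_eq_two T' i
      rw [hiv] at a1 a2
      rw [heq] at a1
      exact not_iff_not.1 (a1.symm.trans a2)
    · constructor <;> intro h <;> exfalso
      · have : v ∈ Set.Icc 1 (2*n-k) := hT.2.2.2 ▸ Set.mem_union_left _ h
        exact hv (Set.mem_Icc.1 this)
      · have : v ∈ Set.Icc 1 (2*n-k) := hT'.2.2.2 ▸ Set.mem_union_left _ h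
        exact hv (Set.mem_Icc.1 this)
  have key2main : ∀ (S : (Fin n → ℕ) × (Fin n → ℕ)), S ∈ RInc n k →
      ∀ i : Fin (2*n-k), ((∃ j, S.2 j = (i:ℕ)+1) ↔ ¬(theta n k S i = 0)) := by
    intro S hS i
    constructor
    · intro hP2 h0
      exact ((theta_eq_zero S i).1 h0).2 hP2
    · intro hne
      rcases fin3_cases (theta n k S i) with h | h | h
      · exact absurd h hne
      · exact ((theta_eq_one S i).1 h).2
      · have hnP1 := (theta_eq_two S i).1 h
        have hmem : ((i:ℕ)+1) ∈ Set.Icc 1 (2*n-k) := Set.mem_Icc.2 ⟨by omega, by omega⟩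
        rw [← hS.2.2.2] at hmem
        rcases hmem with hm | hm
        · exact absurd hm hnP1
        · exact hm
  have key2 : ∀ v, (∃ j, T.2 j = v) ↔ (∃ j, T'.2 j = v) := by
    intro v
    by_cases hv : 1 ≤ v ∧ v ≤ 2*n-k
    · set i : Fin (2*n-k) := ⟨v-1, by omega⟩ with hi
      have hiv : (i:ℕ) + 1 = v := by show v - 1 + 1 = v; omega
      have a1 := key2main T hT i
      have a2 := key2main T' hT' i
      rw [hiv] at a1 a2
      rw [heq] at a1
      exact a1.trans a2.symm
    · constructor <;> intro h <;> exfalso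
      · have : v ∈ Set.Icc 1 (2*n-k) := hT.2.2.2 ▸ Set.mem_union_right _ h
        exact hv (Set.mem_Icc.1 this)
      · have : v ∈ Set.Icc 1 (2*n-k) := hT'.2.2.2 ▸ Set.mem_union_right _ h
        exact hv (Set.mem_Icc.1 this)
  have r1 : Set.range T.1 = Set.range T'.1 := Set.ext fun v => by
    simpa using key1 v
  have r2 : Set.range T.2 = Set.range T'.2 := Set.ext fun v => by
    simpa using key2 v
  have e1 : T.1 = T'.1 := strictMono_eq_of_range_eq hT.1 hT'.1 r1
  have e2 : T.2 = T'.2 := strictMono_eq_of_range_eq hT.2.1 hT'.2.1 r2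
  exact Prod.ext e1 e2

private lemma theta_surjOn {n k : ℕ} (hk : k ≤ n) :
    Set.SurjOn (theta n k) (RInc n k) (SchroederWords n k) := by
  intro w hw
  obtain ⟨hw1, hw0, hw2, hwpre⟩ := hw
  set A := (univ.filter fun i : Fin (2*n-k) => w i ≠ 2).image
      (fun i : Fin (2*n-k) => (i:ℕ)+1) with hAdef
  set B := (univ.filter fun i : Fin (2*n-k) => w i ≠ 0).image
      (fun i : Fin (2*n-k) => (i:ℕ)+1) with hBdef
  have hinj : Function.Injective (fun i : Fin (2*n-k) => (i:ℕ)+1) := by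
    intro a b h
    have : (a:ℕ)+1 = (b:ℕ)+1 := h
    exact Fin.ext (by omega)
  have hAcard : A.card = n := by
    rw [hAdef, card_image_of_injective _ hinj, card_filter_ne2, hw0, hw1]; omega
  have hBcard : B.card = n := by
    rw [hBdef, card_image_of_injective _ hinj, card_filter_ne0, hw1, hw2]; omega
  have hmemA : ∀ i : Fin (2*n-k), ((i:ℕ)+1 ∈ A ↔ w i ≠ 2) := by
    intro i
    rw [hAdef]
    simp only [mem_image, mem_filter, mem_univ, true_and]
    constructor
    · rintro ⟨i', hi', he⟩
      have : i' = i := Fin.ext (by omega)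
      exact this ▸ hi'
    · intro h; exact ⟨i, h, rfl⟩
  have hmemB : ∀ i : Fin (2*n-k), ((i:ℕ)+1 ∈ B ↔ w i ≠ 0) := by
    intro i
    rw [hBdef]
    simp only [mem_image, mem_filter, mem_univ, true_and]
    constructor
    · rintro ⟨i', hi', he⟩
      have : i' = i := Fin.ext (by omega)
      exact this ▸ hi'
    · intro h; exact ⟨i, h, rfl⟩
  have hUnion : A ∪ B = Finset.Icc 1 (2*n-k) := by
    ext v
    simp only [mem_union, Finset.mem_Icc]
    constructor
    · intro h
      rcases h with h | h
      · rw [hAdef] at h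
        obtain ⟨i, _, rfl⟩ := mem_image.1 h
        exact ⟨by omega, by omega⟩
      · rw [hBdef] at h
        obtain ⟨i, _, rfl⟩ := mem_image.1 h
        exact ⟨by omega, by omega⟩
    · intro hv
      have hvi : v - 1 < 2*n-k := by omega
      have hiv : ((⟨v-1, hvi⟩ : Fin (2*n-k)) : ℕ) + 1 = v := by
        show v - 1 + 1 = v; omega
      by_cases h2 : w ⟨v-1, hvi⟩ = 2
      · right; rw [← hiv]; exact (hmemB _).2 (by rw [h2]; decide)
      · left; rw [← hiv]; exact (hmemA _).2 h2
  have hcounts : ∀ j, (B.filter (· ≤ j)).card ≤ (A.filter (· ≤ j)).card := by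
    intro j
    have eB : (B.filter (· ≤ j)).card
        = ((univ.filter fun i : Fin (2*n-k) => (i:ℕ) < j ∧ w i = 1).card
          + (univ.filter fun i : Fin (2*n-k) => (i:ℕ) < j ∧ w i = 2).card) := by
      rw [hBdef, Finset.filter_image, card_image_of_injective _ hinj]
      have hcong : ((univ.filter fun i : Fin (2*n-k) => w i ≠ 0).filter
            fun i : Fin (2*n-k) => (i:ℕ)+1 ≤ j)
          = ((univ.filter fun i : Fin (2*n-k) => (i:ℕ) < j).filter
            fun i : Fin (2*n-k) => w i ≠ 0) := by
        rw [filter_filter, filter_filter]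
        apply filter_congr; intro i _
        constructor
        · rintro ⟨ha, hb⟩; exact ⟨by omega, ha⟩
        · rintro ⟨ha, hb⟩; exact ⟨hb, by omega⟩
      rw [hcong, card_filter_ne0, filter_filter, filter_filter]
    have eA : (A.filter (· ≤ j)).card
        = ((univ.filter fun i : Fin (2*n-k) => (i:ℕ) < j ∧ w i = 0).card
          + (univ.filter fun i : Fin (2*n-k) => (i:ℕ) < j ∧ w i = 1).card) := by
      rw [hAdef, Finset.filter_image, card_image_of_injective _ hinj]
      have hcong : ((univ.filter fun i : Fin (2*n-k) => w i ≠ 2).filter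
            fun i : Fin (2*n-k) => (i:ℕ)+1 ≤ j)
          = ((univ.filter fun i : Fin (2*n-k) => (i:ℕ) < j).filter
            fun i : Fin (2*n-k) => w i ≠ 2) := by
        rw [filter_filter, filter_filter]
        apply filter_congr; intro i _
        constructor
        · rintro ⟨ha, hb⟩; exact ⟨by omega, ha⟩
        · rintro ⟨ha, hb⟩; exact ⟨hb, by omega⟩
      rw [hcong, card_filter_ne2, filter_filter, filter_filter]
    rw [eA, eB]
    have := hwpre j
    omega
  refine ⟨(⇑(A.orderEmbOfFin hAcard), ⇑(B.orderEmbOfFin hBcard)), ⟨?_, ?_, ?_, ?_⟩, ?_⟩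
  · exact (A.orderEmbOfFin hAcard).strictMono
  · exact (B.orderEmbOfFin hBcard).strictMono
  · exact fun i => orderEmb_le_of_counts hAcard hBcard hcounts i
  · show Set.range _ ∪ Set.range _ = _
    rw [Finset.range_orderEmbOfFin, Finset.range_orderEmbOfFin, ← Finset.coe_union, hUnion,
        Finset.coe_Icc]
  · funext i
    have hP1 : (∃ j, (A.orderEmbOfFin hAcard) j = (i:ℕ)+1) ↔ w i ≠ 2 := by
      rw [← hmemA i]
      constructor
      · rintro ⟨j, hj⟩; exact hj ▸ orderEmbOfFin_mem A hAcard j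
      · intro hm
        have : ((i:ℕ)+1) ∈ Set.range (A.orderEmbOfFin hAcard) := by
          rw [Finset.range_orderEmbOfFin]; exact hm
        exact this
    have hP2 : (∃ j, (B.orderEmbOfFin hBcard) j = (i:ℕ)+1) ↔ w i ≠ 0 := by
      rw [← hmemB i]
      constructor
      · rintro ⟨j, hj⟩; exact hj ▸ orderEmbOfFin_mem B hBcard j
      · intro hm
        have : ((i:ℕ)+1) ∈ Set.range (B.orderEmbOfFin hBcard) := by
          rw [Finset.range_orderEmbOfFin]; exact hm
        exact this
    show (if _ then _ else _) = w i
    rcases fin3_cases (w i) with h | h | h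
    · have c1 : ¬((∃ j, (A.orderEmbOfFin hAcard) j = (i:ℕ)+1)
          ∧ (∃ j, (B.orderEmbOfFin hBcard) j = (i:ℕ)+1)) :=
        fun hc => (hP2.1 hc.2) h
      have c2 : ∃ j, (A.orderEmbOfFin hAcard) j = (i:ℕ)+1 := hP1.2 (by rw [h]; decide)
      rw [if_neg c1, if_pos c2, h]
    · have c : ((∃ j, (A.orderEmbOfFin hAcard) j = (i:ℕ)+1)
          ∧ (∃ j, (B.orderEmbOfFin hBcard) j = (i:ℕ)+1)) :=
        ⟨hP1.2 (by rw [h]; decide), hP2.2 (by rw [h]; decide)⟩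
      rw [if_pos c, h]
    · have c1 : ¬((∃ j, (A.orderEmbOfFin hAcard) j = (i:ℕ)+1)
          ∧ (∃ j, (B.orderEmbOfFin hBcard) j = (i:ℕ)+1)) :=
        fun hc => (hP1.1 hc.1) h
      have c2 : ¬∃ j, (A.orderEmbOfFin hAcard) j = (i:ℕ)+1 := fun hp => (hP1.1 hp) h
      rw [if_neg c1, if_neg c2, h]

/-- θ is a bijection from RInc_k(2×n) onto the set of Schröder words of length 2n−k with
k 1's, n−k 0's, n−k 2's and the prefix condition; in particular the cardinalities agree. -/
theorem theta_bijection (n k : ℕ) (hn : 1 ≤ n) (hk : k ≤ n) :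
    Set.BijOn (theta n k) (RInc n k) (SchroederWords n k) ∧
    (RInc n k).ncard = (SchroederWords n k).ncard := by
  have hbij : Set.BijOn (theta n k) (RInc n k) (SchroederWords n k) :=
    ⟨theta_mapsTo hk, theta_injOn, theta_surjOn hk⟩
  refine ⟨hbij, ?_⟩
  rw [← hbij.image_eq, Set.ncard_image_of_injOn hbij.injOn]
end
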